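/- Let u be a semi-stable radially decreasing W^{1,p} solution of -Δ_p u = g(u) on the punctured unit ball (in radial coordinates). Then for every continuously differentiable function η : [0,1] → ℝ with η(1) = 0 (not required to vanish near the origin), one has (n-1) ∫_0^1 r^{n-1} |u'(r)|^p η(r)^2 dr ≤ (p-1) ∫_0^1 r^{n-1} |u'(r)|^p (η(r) + r·η'(r))^2 dr. -/

import Mathlib

open MeasureTheory Set Real Filter

/-- The radial `W^{1,p}` norm of a radial function `u` with radial derivative `u'`
on the unit ball of `ℝ^n`, written in radial coordinates. -/
noncomputable def radialNorm (n : ℕ) (p : ℝ) (u u' : ℝ → ℝ) : ℝ :=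
  (∫ r in Ioc (0:ℝ) 1, r ^ ((n : ℝ) - 1) * (|u r| ^ p + |u' r| ^ p)) ^ (1 / p)

/-- `u : (0,1] → ℝ` (with radial derivative `u'`) is a radially decreasing `W^{1,p}`
solution of `-Δ_p u = g(u)` on the punctured unit ball, in radial coordinates:
`u` is `C^1` on `(0,1]` with derivative `u'`, `u' < 0` on `(0,1)`,
`r ↦ r^{n-1}|u'|^{p-2}u'` has derivative `-r^{n-1} g(u(r))` on `(0,1)`, and the radial
`W^{1,p}` norm of `u` is finite. -/
def IsRadialSolution (n : ℕ) (p : ℝ) (g : ℝ → ℝ) (u u' : ℝ → ℝ) : Prop :=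
  (∀ r ∈ Ioc (0:ℝ) 1, HasDerivWithinAt u (u' r) (Ioc (0:ℝ) 1) r) ∧
  ContinuousOn u' (Ioc (0:ℝ) 1) ∧
  (∀ r ∈ Ioo (0:ℝ) 1, u' r < 0) ∧
  (∀ r ∈ Ioo (0:ℝ) 1,
    HasDerivAt (fun s : ℝ => s ^ ((n : ℝ) - 1) * |u' s| ^ (p - 2) * u' s)
      (-(r ^ ((n : ℝ) - 1) * g (u r))) r) ∧
  IntegrableOn (fun r : ℝ => r ^ ((n : ℝ) - 1) * (|u r| ^ p + |u' r| ^ p)) (Ioc (0:ℝ) 1)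

/-- Semi-stability of a radial solution: the second variation of energy is nonnegative
for every `C^1` test function with compact support in `(0,1)`. -/
def IsSemiStable (n : ℕ) (p : ℝ) (g : ℝ → ℝ) (u u' : ℝ → ℝ) : Prop :=
  ∀ ξ : ℝ → ℝ, ContDiff ℝ 1 ξ → IsCompact (tsupport ξ) → tsupport ξ ⊆ Ioo (0:ℝ) 1 →
    0 ≤ ∫ r in Ioc (0:ℝ) 1,
        r ^ ((n : ℝ) - 1) *
          ((p - 1) * |u' r| ^ (p - 2) * (deriv ξ r) ^ 2 - deriv g (u r) * (ξ r) ^ 2)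


open Topology

private lemma rpow_cancel {x : ℝ} (hx : 0 < x) {p : ℝ} (hp : 1 < p) :
    (x ^ (p-1)) ^ (1/(p-1)) = x := by
  rw [← Real.rpow_mul hx.le, mul_one_div, div_self (sub_pos.2 hp).ne', Real.rpow_one]

private lemma rpow_mul_self {x : ℝ} (hx : x ≠ 0) (p : ℝ) : x ^ (p-2) * x = x ^ (p-1) := by
  rw [show p-1 = (p-2)+1 by ring, Real.rpow_add_one hx]

private lemma vanish_integral_helper (f : ℝ → ℝ) {a b : ℝ} (ha : 0 < a) (hab : a ≤ b)
    (hb : b ≤ 1) (hcont : ContinuousOn f (Icc a b)) (hvan : ∀ r, r ∉ Icc a b → f r = 0) :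
    IntegrableOn f (Ioc 0 1) ∧ ∫ r in Ioc (0:ℝ) 1, f r = ∫ r in a..b, f r := by
  have hInt : IntegrableOn f (Icc a b) := hcont.integrableOn_compact isCompact_Icc
  have h1 : IntegrableOn f (Ioc 0 1) := by
    have h2 : IntegrableOn f (Ioc 0 1 \ Icc a b) := by
      rw [integrableOn_congr_fun (g := fun _ => (0:ℝ)) (fun x hx => hvan x hx.2)
        (measurableSet_Ioc.diff measurableSet_Icc)]
      exact integrableOn_zero
    exact (hInt.union h2).mono_set (fun x hx => by
      by_cases h : x ∈ Icc a b
      · exact Or.inl h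
      · exact Or.inr ⟨hx, h⟩)
  refine ⟨h1, ?_⟩
  have he : ∀ x ∈ Ioc (0:ℝ) 1, f x = (Icc a b).indicator f x := fun x hx => by
    by_cases h : x ∈ Icc a b
    · rw [indicator_of_mem h]
    · rw [indicator_of_notMem h, hvan x h]
  have hIcc : Ioc (0:ℝ) 1 ∩ Icc a b = Icc a b :=
    inter_eq_self_of_subset_right (fun x (hx : x ∈ Icc a b) => ⟨ha.trans_le hx.1, hx.2.trans hb⟩)
  rw [setIntegral_congr_fun measurableSet_Ioc he, setIntegral_indicator measurableSet_Icc,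
    hIcc, intervalIntegral.integral_of_le hab, ← integral_Icc_eq_integral_Ioc]

private lemma key_deriv (n : ℕ) (p : ℝ) (hp : 1 < p) (g u u' : ℝ → ℝ)
    (hu'neg : ∀ r ∈ Ioo (0:ℝ) 1, u' r < 0)
    (hODE : ∀ r ∈ Ioo (0:ℝ) 1,
      HasDerivAt (fun s : ℝ => s ^ ((n:ℝ)-1) * |u' s| ^ (p-2) * u' s)
        (-(r ^ ((n:ℝ)-1) * g (u r))) r)
    {r : ℝ} (hr : r ∈ Ioo (0:ℝ) 1) :
    ∃ V, HasDerivAt (fun s => -u' s) V r ∧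
      r ^ ((n:ℝ)-1) * g (u r) = ((n:ℝ)-1) * r ^ ((n:ℝ)-2) * (-u' r) ^ (p-1)
        + r ^ ((n:ℝ)-1) * ((p-1) * (-u' r) ^ (p-2) * V) := by
  have hr0 : 0 < r := hr.1
  have hnhds : Ioo (0:ℝ) 1 ∈ 𝓝 r := isOpen_Ioo.mem_nhds hr
  have hvr : 0 < -u' r := neg_pos.2 (hu'neg r hr)
  have hWB : ∀ s ∈ Ioo (0:ℝ) 1,
      s ^ ((n:ℝ)-1) * (-u' s) ^ (p-1) = -(s ^ ((n:ℝ)-1) * |u' s| ^ (p-2) * u' s) := by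
    intro s hs
    have hvs : 0 < -u' s := neg_pos.2 (hu'neg s hs)
    rw [abs_of_neg (hu'neg s hs), ← rpow_mul_self hvs.ne' p]
    ring
  have hB : HasDerivAt (fun s => s ^ ((n:ℝ)-1) * (-u' s) ^ (p-1))
      (r ^ ((n:ℝ)-1) * g (u r)) r := by
    have h1 := (hODE r hr).neg
    rw [neg_neg] at h1
    exact h1.congr_of_eventuallyEq (by filter_upwards [hnhds] with s hs using hWB s hs)
  have hh : ∀ s ∈ Ioo (0:ℝ) 1,
      s ^ ((n:ℝ)-1) * (-u' s) ^ (p-1) * s ^ (1-(n:ℝ)) = (-u' s) ^ (p-1) := by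
    intro s hs
    have h2 : s ^ ((n:ℝ)-1) * s ^ (1-(n:ℝ)) = 1 := by
      rw [← Real.rpow_add hs.1, show ((n:ℝ)-1) + (1-(n:ℝ)) = 0 by ring, Real.rpow_zero]
    calc s ^ ((n:ℝ)-1) * (-u' s) ^ (p-1) * s ^ (1-(n:ℝ))
        = (-u' s) ^ (p-1) * (s ^ ((n:ℝ)-1) * s ^ (1-(n:ℝ))) := by ring
      _ = (-u' s) ^ (p-1) := by rw [h2, mul_one]
  have hinner : HasDerivAt (fun s => s ^ ((n:ℝ)-1) * (-u' s) ^ (p-1) * s ^ (1-(n:ℝ)))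
      (r ^ ((n:ℝ)-1) * g (u r) * r ^ (1-(n:ℝ))
        + r ^ ((n:ℝ)-1) * (-u' r) ^ (p-1) * ((1-(n:ℝ)) * r ^ ((1-(n:ℝ))-1))) r :=
    hB.mul (Real.hasDerivAt_rpow_const (Or.inl hr0.ne'))
  have hhr : r ^ ((n:ℝ)-1) * (-u' r) ^ (p-1) * r ^ (1-(n:ℝ)) = (-u' r) ^ (p-1) := hh r hr
  have hhne : r ^ ((n:ℝ)-1) * (-u' r) ^ (p-1) * r ^ (1-(n:ℝ)) ≠ 0 := by
    rw [hhr]; exact (Real.rpow_pos_of_pos hvr _).ne'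
  have houter := hinner.rpow_const (p := 1/(p-1)) (Or.inl hhne)
  have hveq : ∀ s ∈ Ioo (0:ℝ) 1,
      (fun s => -u' s) s
        = (fun s => (s ^ ((n:ℝ)-1) * (-u' s) ^ (p-1) * s ^ (1-(n:ℝ))) ^ (1/(p-1))) s := by
    intro s hs
    simp only []
    rw [hh s hs, rpow_cancel (neg_pos.2 (hu'neg s hs)) hp]
  have hv : HasDerivAt (fun s => -u' s)
      ((r ^ ((n:ℝ)-1) * g (u r) * r ^ (1-(n:ℝ))
        + r ^ ((n:ℝ)-1) * (-u' r) ^ (p-1) * ((1-(n:ℝ)) * r ^ ((1-(n:ℝ))-1)))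
        * (1/(p-1)) * (r ^ ((n:ℝ)-1) * (-u' r) ^ (p-1) * r ^ (1-(n:ℝ))) ^ (1/(p-1)-1)) r :=
    houter.congr_of_eventuallyEq (by filter_upwards [hnhds] with s hs using hveq s hs)
  refine ⟨_, hv, ?_⟩
  have hvp2 := hv.rpow_const (p := p-1) (Or.inl hvr.ne')
  have hB2 := (Real.hasDerivAt_rpow_const (p := (n:ℝ)-1) (Or.inl hr0.ne')).mul hvp2
  have huniq := hB.unique hB2
  rw [show ((n:ℝ)-1)-1 = (n:ℝ)-2 by ring, show p-1-1 = p-2 by ring] at huniq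
  linear_combination huniq

private lemma stepA (n : ℕ) (p : ℝ) (hp : 1 < p) (g u u' : ℝ → ℝ) (hg : ContDiff ℝ 1 g)
    (hsol : IsRadialSolution n p g u u') (hstab : IsSemiStable n p g u u')
    (φ : ℝ → ℝ) (hφ : ContDiff ℝ 1 φ) (hsupp : tsupport φ ⊆ Ioo (0:ℝ) 1) :
    ((n:ℝ)-1) * ∫ r in Ioc (0:ℝ) 1, r ^ ((n:ℝ)-3) * |u' r| ^ p * (φ r)^2
      ≤ (p-1) * ∫ r in Ioc (0:ℝ) 1, r ^ ((n:ℝ)-1) * |u' r| ^ p * (deriv φ r)^2 := by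
  obtain ⟨hu, hu'c, hu'neg, hODE, hInt⟩ := hsol
  have hp0 : (0:ℝ) ≤ p := by linarith
  have hu_cont : ContinuousOn u (Ioc (0:ℝ) 1) := fun r hr => (hu r hr).continuousWithinAt
  have hφd : ∀ s, HasDerivAt φ (deriv φ s) s :=
    fun s => ((hφ.differentiable one_ne_zero) s).hasDerivAt
  set ξ : ℝ → ℝ := fun s => u' s * φ s with hξ_def
  have hφ0 : ∀ s, s ∉ tsupport φ → φ s = 0 := fun s hs => image_eq_zero_of_notMem_tsupport hs
  have hdφ0 : ∀ s, s ∉ tsupport φ → deriv φ s = 0 := by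
    intro s hs; by_contra h; exact hs (support_deriv_subset (Function.mem_support.2 h))
  have hξ0 : ∀ s, s ∉ tsupport φ → ξ s = 0 := fun s hs => by simp [hξ_def, hφ0 s hs]
  have hts : tsupport ξ ⊆ tsupport φ := by
    apply closure_mono
    intro s hs
    simp only [Function.mem_support] at hs ⊢
    intro h
    exact hs (by simp [hξ_def, h])
  have hdξ0 : ∀ s, s ∉ tsupport φ → deriv ξ s = 0 := by
    intro s hs; by_contra h
    exact hs (hts (support_deriv_subset (Function.mem_support.2 h)))
  have hcomp : IsCompact (tsupport φ) :=
    isCompact_Icc.of_isClosed_subset (isClosed_tsupport φ)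
      (hsupp.trans Ioo_subset_Icc_self)
  -- smoothness of -u' on Ioo
  have hrpow_cont : ∀ c : ℝ, ContinuousOn (fun s : ℝ => s ^ c) (Ioo (0:ℝ) 1) :=
    fun c s hs => (Real.continuousAt_rpow_const s c (Or.inl hs.1.ne')).continuousWithinAt
  have hWv : ∀ s ∈ Ioo (0:ℝ) 1,
      -(s ^ ((n:ℝ)-1) * |u' s| ^ (p-2) * u' s) * s ^ (1-(n:ℝ)) = (-u' s) ^ (p-1) := by
    intro s hs
    have hvs : 0 < -u' s := neg_pos.2 (hu'neg s hs)
    have h2 : s ^ ((n:ℝ)-1) * s ^ (1-(n:ℝ)) = 1 := by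
      rw [← Real.rpow_add hs.1, show ((n:ℝ)-1) + (1-(n:ℝ)) = 0 by ring, Real.rpow_zero]
    rw [abs_of_neg (hu'neg s hs), ← rpow_mul_self hvs.ne' p]
    calc -(s ^ ((n:ℝ)-1) * (-u' s) ^ (p-2) * u' s) * s ^ (1-(n:ℝ))
        = ((-u' s) ^ (p-2) * (-u' s)) * (s ^ ((n:ℝ)-1) * s ^ (1-(n:ℝ))) := by ring
      _ = (-u' s) ^ (p-2) * (-u' s) := by rw [h2, mul_one]
  have hWC1 : ContDiffOn ℝ 1 (fun s : ℝ => s ^ ((n:ℝ)-1) * |u' s| ^ (p-2) * u' s)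
      (Ioo (0:ℝ) 1) := by
    rw [show (1 : WithTop ℕ∞) = 0 + 1 from rfl, contDiffOn_succ_iff_deriv_of_isOpen isOpen_Ioo]
    refine ⟨fun s hs => ((hODE s hs).differentiableAt).differentiableWithinAt, by simp, ?_⟩
    rw [contDiffOn_zero]
    have hcont : ContinuousOn (fun s : ℝ => -(s ^ ((n:ℝ)-1) * g (u s))) (Ioo (0:ℝ) 1) :=
      ((hrpow_cont _).mul (hg.continuous.comp_continuousOn
        (hu_cont.mono Ioo_subset_Ioc_self))).neg
    exact ContinuousOn.congr hcont (fun s hs => (hODE s hs).deriv)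
  have hvC1 : ContDiffOn ℝ 1 (fun s => -u' s) (Ioo (0:ℝ) 1) := by
    have h1 : ContDiffOn ℝ 1
        (fun s : ℝ => (-(s ^ ((n:ℝ)-1) * |u' s| ^ (p-2) * u' s) * s ^ (1-(n:ℝ))) ^ (1/(p-1)))
        (Ioo (0:ℝ) 1) := by
      intro x hx
      have hWx : ContDiffAt ℝ 1 (fun s : ℝ => s ^ ((n:ℝ)-1) * |u' s| ^ (p-2) * u' s) x :=
        hWC1.contDiffAt (isOpen_Ioo.mem_nhds hx)
      have h2 : ContDiffAt ℝ 1
          (fun s : ℝ => -(s ^ ((n:ℝ)-1) * |u' s| ^ (p-2) * u' s) * s ^ (1-(n:ℝ))) x :=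
        (hWx.neg).mul (Real.contDiffAt_rpow_const_of_ne hx.1.ne')
      have h3 : (-(x ^ ((n:ℝ)-1) * |u' x| ^ (p-2) * u' x) * x ^ (1-(n:ℝ))) ≠ 0 := by
        rw [hWv x hx]
        exact (Real.rpow_pos_of_pos (neg_pos.2 (hu'neg x hx)) _).ne'
      exact (h2.rpow_const_of_ne h3).contDiffWithinAt
    exact h1.congr (fun s hs => by
      rw [hWv s hs, rpow_cancel (neg_pos.2 (hu'neg s hs)) hp])
  have hξC1 : ContDiff ℝ 1 ξ := by
    rw [contDiff_iff_contDiffAt]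
    intro x
    by_cases hx : x ∈ Ioo (0:ℝ) 1
    · have h1 : ContDiffAt ℝ 1 (fun s => -(-u' s) * φ s) x :=
        ((hvC1.contDiffAt (isOpen_Ioo.mem_nhds hx)).neg).mul hφ.contDiffAt
      exact h1.congr_of_eventuallyEq
        (Filter.Eventually.of_forall (fun s => by simp [hξ_def]))
    · have ho : (tsupport φ)ᶜ ∈ 𝓝 x :=
        (isClosed_tsupport φ).isOpen_compl.mem_nhds (fun hc => hx (hsupp hc))
      exact (contDiffAt_const (c := (0:ℝ))).congr_of_eventuallyEq
        (by filter_upwards [ho] with s hs using hξ0 s hs)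
  have hξcomp : IsCompact (tsupport ξ) := hcomp.of_isClosed_subset (isClosed_tsupport ξ) hts
  have hstab' := hstab ξ hξC1 hξcomp (hts.trans hsupp)
  -- choice of a, b
  set K : Set ℝ := insert (1/2 : ℝ) (tsupport φ) with hK_def
  have hKc : IsCompact K := hcomp.insert _
  have hKsub : K ⊆ Ioo (0:ℝ) 1 := insert_subset (by norm_num) hsupp
  have hKne : K.Nonempty := ⟨1/2, mem_insert _ _⟩
  have ha0 : sInf K ∈ K := hKc.isClosed.csInf_mem hKne hKc.bddBelow
  have hb0 : sSup K ∈ K := hKc.isClosed.csSup_mem hKne hKc.bddAbove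
  obtain ⟨ha0p, ha0lt⟩ := hKsub ha0
  obtain ⟨hb0p, hb0lt⟩ := hKsub hb0
  set a := sInf K / 2 with ha_def
  set b := (sSup K + 1) / 2 with hb_def
  have hap : 0 < a := by rw [ha_def]; linarith
  have hb1 : b < 1 := by rw [hb_def]; linarith
  have hhalf_mem : (1/2:ℝ) ∈ K := mem_insert _ _
  have hi2 : sInf K ≤ 1/2 := csInf_le hKc.bddBelow hhalf_mem
  have hs2 : 1/2 ≤ sSup K := le_csSup hKc.bddAbove hhalf_mem
  have hab : a ≤ b := by rw [ha_def, hb_def]; linarith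
  have hsuppab : tsupport φ ⊆ Ioo a b := by
    intro x hx
    have h1 : sInf K ≤ x := csInf_le hKc.bddBelow (mem_insert_of_mem _ hx)
    have h2 : x ≤ sSup K := le_csSup hKc.bddAbove (mem_insert_of_mem _ hx)
    exact ⟨by rw [ha_def]; linarith, by rw [hb_def]; linarith⟩
  have hIcc_sub : Icc a b ⊆ Ioo (0:ℝ) 1 :=
    fun x hx => ⟨hap.trans_le hx.1, lt_of_le_of_lt hx.2 hb1⟩
  have hb_le1 : b ≤ 1 := hb1.le
  have hnotin : ∀ r, r ∉ Icc a b → r ∉ tsupport φ :=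
    fun r hr hmem => hr (Ioo_subset_Icc_self (hsuppab hmem))
  -- the functions
  set stabF : ℝ → ℝ := fun r => r ^ ((n:ℝ)-1) *
      ((p-1) * |u' r| ^ (p-2) * (deriv ξ r)^2 - deriv g (u r) * (ξ r)^2) with hstabF_def
  set xF : ℝ → ℝ := fun r => r ^ ((n:ℝ)-1) * |u' r| ^ p * (deriv φ r)^2 with hxF_def
  set yF : ℝ → ℝ := fun r => r ^ ((n:ℝ)-3) * |u' r| ^ p * (φ r)^2 with hyF_def
  set mainF : ℝ → ℝ := fun r => (p-1) * xF r - ((n:ℝ)-1) * yF r with hmainF_def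
  set G : ℝ → ℝ := fun s => s ^ ((n:ℝ)-1) * g (u s) * (-u' s) * (φ s)^2
      - ((n:ℝ)-1) * (s ^ ((n:ℝ)-2) * (-u' s) ^ p * (φ s)^2) with hG_def
  -- the pointwise identity
  have hDG : ∀ r ∈ Ioo (0:ℝ) 1, HasDerivAt G (stabF r - mainF r) r := by
    intro r hr
    obtain ⟨V, hv, hKey⟩ := key_deriv n p hp g u u' hu'neg hODE hr
    have hr0 : 0 < r := hr.1
    have hu'r : u' r < 0 := hu'neg r hr
    have hvr : 0 < -u' r := neg_pos.2 hu'r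
    have hur : HasDerivAt u (u' r) r :=
      (hu r ⟨hr.1, hr.2.le⟩).hasDerivAt (Ioc_mem_nhds hr.1 hr.2)
    have hgu : HasDerivAt (fun s => g (u s)) (deriv g (u r) * u' r) r :=
      (((hg.differentiable one_ne_zero) (u r)).hasDerivAt).comp r hur
    have hφ2 := (hφd r).fun_pow (n := 2)
    have hξd : HasDerivAt ξ (-(V * φ r + (-u' r) * deriv φ r)) r := by
      have h1 : HasDerivAt (fun s => -((-u' s) * φ s)) (-(V * φ r + (-u' r) * deriv φ r)) r :=
        (hv.mul (hφd r)).neg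
      exact h1.congr_of_eventuallyEq
        (Filter.Eventually.of_forall (fun s => by simp [hξ_def, neg_mul, neg_neg]))
    have hdξ : deriv ξ r = -(V * φ r + (-u' r) * deriv φ r) := hξd.deriv
    have hrp1 : HasDerivAt (fun s : ℝ => s ^ ((n:ℝ)-1)) (((n:ℝ)-1) * r ^ (((n:ℝ)-1)-1)) r :=
      Real.hasDerivAt_rpow_const (Or.inl hr0.ne')
    have hrp2 : HasDerivAt (fun s : ℝ => s ^ ((n:ℝ)-2)) (((n:ℝ)-2) * r ^ (((n:ℝ)-2)-1)) r :=
      Real.hasDerivAt_rpow_const (Or.inl hr0.ne')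
    have hvp := hv.rpow_const (p := p) (Or.inl hvr.ne')
    have hGd := (((hrp1.fun_mul hgu).fun_mul hv).fun_mul hφ2).fun_sub
      (((hrp2.fun_mul hvp).fun_mul hφ2).const_mul ((n:ℝ)-1))
    rw [hG_def]
    refine hGd.congr_deriv (Eq.symm ?_)
    simp only [hstabF_def, hmainF_def, hxF_def, hyF_def, hξ_def]
    rw [hdξ, abs_of_neg hu'r]
    rw [show ((n:ℝ)-1)-1 = (n:ℝ)-2 by ring, show ((n:ℝ)-2)-1 = (n:ℝ)-3 by ring]
    have hA2 : r ^ ((n:ℝ)-2) = r ^ ((n:ℝ)-3) * r := by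
      rw [show (n:ℝ)-2 = ((n:ℝ)-3)+1 by ring, Real.rpow_add_one hr0.ne']
    have hA1 : r ^ ((n:ℝ)-1) = r ^ ((n:ℝ)-3) * r * r := by
      rw [show (n:ℝ)-1 = (((n:ℝ)-3)+1)+1 by ring, Real.rpow_add_one hr0.ne',
        Real.rpow_add_one hr0.ne']
    have hc1 : (-u' r) ^ (p-1) = (-u' r) ^ (p-2) * (-u' r) := (rpow_mul_self hvr.ne' p).symm
    have hcp : (-u' r) ^ p = (-u' r) ^ (p-2) * (-u' r) * (-u' r) := by
      have h5 : (-u' r) ^ ((p-1)+1) = (-u' r) ^ (p-1) * (-u' r) := Real.rpow_add_one hvr.ne' _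
      rw [show (p-1)+1 = p by ring] at h5
      rw [h5, hc1]
    rw [hA1, hA2, hc1] at hKey
    have h0 : r ^ ((n:ℝ)-3) * r ≠ 0 :=
      mul_ne_zero (Real.rpow_pos_of_pos hr0 _).ne' hr0.ne'
    have hK2 : r * g (u r) = ((n:ℝ)-1) * ((-u' r) ^ (p-2) * (-u' r))
        + r * ((p-1) * (-u' r) ^ (p-2) * V) := by
      apply mul_left_cancel₀ h0
      linear_combination hKey
    rw [hA1, hA2, hcp, hc1]
    linear_combination (-(r ^ ((n:ℝ)-3))) * (((n:ℝ)-1) * (-u' r) * (φ r)^2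
      + r * V * (φ r)^2 + 2*r*(-u' r)*(φ r)*(deriv φ r)) * hK2
  -- continuity on Icc a b
  have hIccIoc : Icc a b ⊆ Ioc (0:ℝ) 1 := hIcc_sub.trans Ioo_subset_Ioc_self
  have hcont_u' : ContinuousOn u' (Icc a b) := hu'c.mono hIccIoc
  have hcont_rpow : ∀ c : ℝ, ContinuousOn (fun s : ℝ => s ^ c) (Icc a b) :=
    fun c => (hrpow_cont c).mono hIcc_sub
  have hcont_absp : ContinuousOn (fun s => |u' s| ^ p) (Icc a b) :=
    (hcont_u'.abs).rpow_const (fun x hx => Or.inr hp0)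
  have hcont_absp2 : ContinuousOn (fun s => |u' s| ^ (p-2)) (Icc a b) :=
    (hcont_u'.abs).rpow_const
      (fun x hx => Or.inl (abs_ne_zero.2 (hu'neg x (hIcc_sub hx)).ne))
  have hcont_u : ContinuousOn u (Icc a b) := hu_cont.mono hIccIoc
  have hcont_dgu : ContinuousOn (fun s => deriv g (u s)) (Icc a b) :=
    (hg.continuous_deriv le_rfl).comp_continuousOn hcont_u
  have hcont_g : ContinuousOn (fun s => g (u s)) (Icc a b) :=
    hg.continuous.comp_continuousOn hcont_u
  have hcont_dξ : ContinuousOn (deriv ξ) (Icc a b) := (hξC1.continuous_deriv le_rfl).continuousOn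
  have hcont_ξ : ContinuousOn ξ (Icc a b) := hξC1.continuous.continuousOn
  have hcont_φ : ContinuousOn φ (Icc a b) := hφ.continuous.continuousOn
  have hcont_dφ : ContinuousOn (deriv φ) (Icc a b) := (hφ.continuous_deriv le_rfl).continuousOn
  have hcont_v : ContinuousOn (fun s => -u' s) (Icc a b) := hcont_u'.neg
  have hcont_vp : ContinuousOn (fun s => (-u' s) ^ p) (Icc a b) :=
    hcont_v.rpow_const (fun x hx => Or.inr hp0)
  have hcont_stab : ContinuousOn stabF (Icc a b) := by
    rw [hstabF_def]
    exact (hcont_rpow _).mul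
      (((continuousOn_const.mul hcont_absp2).mul (hcont_dξ.pow 2)).sub
        (hcont_dgu.mul (hcont_ξ.pow 2)))
  have hcont_x : ContinuousOn xF (Icc a b) := by
    rw [hxF_def]; exact ((hcont_rpow _).mul hcont_absp).mul (hcont_dφ.pow 2)
  have hcont_y : ContinuousOn yF (Icc a b) := by
    rw [hyF_def]; exact ((hcont_rpow _).mul hcont_absp).mul (hcont_φ.pow 2)
  have hcont_main : ContinuousOn mainF (Icc a b) := by
    rw [hmainF_def]
    exact (continuousOn_const.mul hcont_x).sub (continuousOn_const.mul hcont_y)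
  have hcont_DG : ContinuousOn (fun r => stabF r - mainF r) (Icc a b) :=
    hcont_stab.sub hcont_main
  -- vanishing outside Icc a b
  have hvan_x : ∀ r, r ∉ Icc a b → xF r = 0 := fun r hr => by
    rw [hxF_def]; simp [hdφ0 r (hnotin r hr)]
  have hvan_y : ∀ r, r ∉ Icc a b → yF r = 0 := fun r hr => by
    rw [hyF_def]; simp [hφ0 r (hnotin r hr)]
  have hvan_stab : ∀ r, r ∉ Icc a b → stabF r = 0 := fun r hr => by
    rw [hstabF_def]; simp [hξ0 r (hnotin r hr), hdξ0 r (hnotin r hr)]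
  have hvan_main : ∀ r, r ∉ Icc a b → mainF r = 0 := fun r hr => by
    rw [hmainF_def]; simp [hvan_x r hr, hvan_y r hr]
  have hvan_DG : ∀ r, r ∉ Icc a b → stabF r - mainF r = 0 := fun r hr => by
    rw [hvan_stab r hr, hvan_main r hr, sub_zero]
  -- integrability and integral identities
  obtain ⟨hIx, hEx⟩ := vanish_integral_helper xF hap hab hb_le1 hcont_x hvan_x
  obtain ⟨hIy, hEy⟩ := vanish_integral_helper yF hap hab hb_le1 hcont_y hvan_y
  obtain ⟨hIdg, hEdg⟩ := vanish_integral_helper (fun r => stabF r - mainF r) hap hab hb_le1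
    hcont_DG hvan_DG
  -- FTC
  have hG_ab : ∀ x ∈ uIcc a b, HasDerivAt G ((fun r => stabF r - mainF r) x) x := by
    intro x hx
    rw [uIcc_of_le hab] at hx
    exact hDG x (hIcc_sub hx)
  have hInt_ab : IntervalIntegrable (fun r => stabF r - mainF r) volume a b := by
    apply ContinuousOn.intervalIntegrable
    rw [uIcc_of_le hab]; exact hcont_DG
  have hFTC : ∫ r in a..b, (stabF r - mainF r) = G b - G a :=
    intervalIntegral.integral_eq_sub_of_hasDerivAt hG_ab hInt_ab
  have hGa : G a = 0 := by
    have hφa : φ a = 0 := hφ0 a (fun h => (lt_irrefl a) (hsuppab h).1)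
    rw [hG_def]; simp [hφa]
  have hGb : G b = 0 := by
    have hφb : φ b = 0 := hφ0 b (fun h => (lt_irrefl b) (hsuppab h).2)
    rw [hG_def]; simp [hφb]
  have hDGzero : ∫ r in Ioc (0:ℝ) 1, (stabF r - mainF r) = 0 := by
    rw [hEdg, hFTC, hGa, hGb, sub_zero]
  have hmain_int : IntegrableOn mainF (Ioc (0:ℝ) 1) := by
    rw [hmainF_def]
    exact (hIx.const_mul _).sub (hIy.const_mul _)
  have hstab_split : ∫ r in Ioc (0:ℝ) 1, stabF r
      = (∫ r in Ioc (0:ℝ) 1, mainF r) + ∫ r in Ioc (0:ℝ) 1, (stabF r - mainF r) := by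
    rw [← integral_add hmain_int hIdg]
    exact setIntegral_congr_fun measurableSet_Ioc (fun r _ => by ring)
  have hmain_val : ∫ r in Ioc (0:ℝ) 1, mainF r
      = (p-1) * (∫ r in Ioc (0:ℝ) 1, xF r) - ((n:ℝ)-1) * ∫ r in Ioc (0:ℝ) 1, yF r := by
    rw [hmainF_def]
    rw [integral_sub (hIx.const_mul _) (hIy.const_mul _), integral_const_mul, integral_const_mul]
  have h8 : (0:ℝ) ≤ ∫ r in Ioc (0:ℝ) 1, stabF r := hstab'
  rw [hstab_split, hmain_val, hDGzero] at h8
  linarith [h8]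

set_option maxHeartbeats 1000000

theorem stmt8 (n : ℕ) (hn : 1 ≤ n) (p : ℝ) (hp : 1 < p)
    (g u u' : ℝ → ℝ) (hg : ContDiff ℝ 1 g)
    (hsol : IsRadialSolution n p g u u') (hstab : IsSemiStable n p g u u')
    (η : ℝ → ℝ) (hη : ContDiff ℝ 1 η) (hη1 : η 1 = 0) :
    ((n : ℝ) - 1) * ∫ r in Ioc (0:ℝ) 1, r ^ ((n : ℝ) - 1) * |u' r| ^ p * (η r) ^ 2
      ≤ (p - 1) * ∫ r in Ioc (0:ℝ) 1,
          r ^ ((n : ℝ) - 1) * |u' r| ^ p * (η r + r * deriv η r) ^ 2 := by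
  have hp0 : (0:ℝ) ≤ p := by linarith
  have hu'c : ContinuousOn u' (Ioc (0:ℝ) 1) := hsol.2.1
  have hu'neg : ∀ r ∈ Ioo (0:ℝ) 1, u' r < 0 := hsol.2.2.1
  have hηd : ∀ s, HasDerivAt η (deriv η s) s := fun s => ((hη.differentiable one_ne_zero) s).hasDerivAt
  -- θ facts
  have hθC : ContDiff ℝ 1 Real.smoothTransition := Real.smoothTransition.contDiff
  have hθd : ∀ z, HasDerivAt Real.smoothTransition (deriv Real.smoothTransition z) z :=
    fun z => ((hθC.differentiable one_ne_zero) z).hasDerivAt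
  have hθ'0 : ∀ x : ℝ, x ∉ Ioo (0:ℝ) 1 → deriv Real.smoothTransition x = 0 := by
    intro x hx
    rcases lt_trichotomy x 0 with h | h | h
    · have he : Real.smoothTransition =ᶠ[𝓝 x] (fun _ => (0:ℝ)) := by
        filter_upwards [Iio_mem_nhds h] with s hs
        exact Real.smoothTransition.zero_of_nonpos (le_of_lt hs)
      rw [he.deriv_eq, deriv_const]
    · subst h
      have : IsLocalMin Real.smoothTransition 0 := by
        apply Filter.Eventually.of_forall
        intro y
        rw [Real.smoothTransition.zero]
        exact Real.smoothTransition.nonneg y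
      exact this.deriv_eq_zero
    · rcases lt_trichotomy x 1 with h1 | h1 | h1
      · exact absurd ⟨h, h1⟩ hx
      · subst h1
        have : IsLocalMax Real.smoothTransition 1 := by
          apply Filter.Eventually.of_forall
          intro y
          rw [Real.smoothTransition.one]
          exact Real.smoothTransition.le_one y
        exact this.deriv_eq_zero
      · have he : Real.smoothTransition =ᶠ[𝓝 x] (fun _ => (1:ℝ)) := by
          filter_upwards [Ioi_mem_nhds h1] with s hs
          exact Real.smoothTransition.one_of_one_le (le_of_lt hs)
        rw [he.deriv_eq, deriv_const]
  obtain ⟨Cθ, hCθ'⟩ := (isCompact_Icc (a := (0:ℝ)) (b := 1)).exists_bound_of_continuousOn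
    ((hθC.continuous_deriv le_rfl).continuousOn)
  have hCθ : ∀ x : ℝ, |deriv Real.smoothTransition x| ≤ Cθ := by
    intro x
    by_cases hx : x ∈ Icc (0:ℝ) 1
    · simpa [Real.norm_eq_abs] using hCθ' x hx
    · rw [hθ'0 x (fun h => hx (Ioo_subset_Icc_self h)), abs_zero]
      have := hCθ' 0 ⟨le_refl _, zero_le_one⟩
      simpa using le_trans (norm_nonneg _) this
  have hCθ0 : 0 ≤ Cθ := le_trans (abs_nonneg _) (hCθ 0)
  -- η constants
  obtain ⟨Cη, hCη'⟩ := (isCompact_Icc (a := (0:ℝ)) (b := 1)).exists_bound_of_continuousOn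
    (hη.continuous.continuousOn)
  have hCη : ∀ r ∈ Icc (0:ℝ) 1, |η r| ≤ Cη := fun r hr => by
    simpa [Real.norm_eq_abs] using hCη' r hr
  have hCη0 : 0 ≤ Cη := le_trans (abs_nonneg _) (hCη 0 ⟨le_refl _, zero_le_one⟩)
  obtain ⟨C1, hC1'⟩ := (isCompact_Icc (a := (0:ℝ)) (b := 1)).exists_bound_of_continuousOn
    ((hη.continuous.add (continuous_id.mul (hη.continuous_deriv le_rfl))).continuousOn
      (s := Icc (0:ℝ) 1))
  have hC1 : ∀ r ∈ Icc (0:ℝ) 1, |η r + r * deriv η r| ≤ C1 := fun r hr => by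
    simpa [Real.norm_eq_abs] using hC1' r hr
  have hC10 : 0 ≤ C1 :=
    le_trans (abs_nonneg _) (hC1 0 ⟨le_refl _, zero_le_one⟩)
  obtain ⟨L, hL'⟩ := (isCompact_Icc (a := (0:ℝ)) (b := 1)).exists_bound_of_continuousOn
    ((hη.continuous_deriv le_rfl).continuousOn)
  have hLip : ∀ r ∈ Icc (0:ℝ) 1, |η r| ≤ L * (1 - r) := by
    intro r hr
    have h1 : ‖η r - η 1‖ ≤ L * ‖r - 1‖ :=
      (convex_Icc (0:ℝ) 1).norm_image_sub_le_of_norm_hasDerivWithin_le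
        (f' := deriv η) (fun x hx => (hηd x).hasDerivWithinAt) hL'
        (right_mem_Icc.2 zero_le_one) hr
    rw [hη1, sub_zero, Real.norm_eq_abs, Real.norm_eq_abs, abs_sub_comm r 1,
      abs_of_nonneg (by linarith [hr.2] : (0:ℝ) ≤ 1 - r)] at h1
    exact h1
  have hL0 : 0 ≤ L := le_trans (norm_nonneg _) (hL' 0 ⟨le_refl _, zero_le_one⟩)
  -- cutoff functions
  set ζ : ℕ → ℝ → ℝ := fun k r =>
    Real.smoothTransition ((k:ℝ)*r - 1) * Real.smoothTransition ((k:ℝ)*(1-r) - 1) with hζ_def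
  set φk : ℕ → ℝ → ℝ := fun k r => ζ k r * (r * η r) with hφk_def
  have hζ01 : ∀ k r, 0 ≤ ζ k r ∧ ζ k r ≤ 1 := fun k r =>
    ⟨mul_nonneg (Real.smoothTransition.nonneg _) (Real.smoothTransition.nonneg _),
     mul_le_one₀ (Real.smoothTransition.le_one _) (Real.smoothTransition.nonneg _)
       (Real.smoothTransition.le_one _)⟩
  have hζC : ∀ k, ContDiff ℝ 1 (ζ k) := by
    intro k
    simp only [hζ_def]
    exact (Real.smoothTransition.contDiff.comp
        ((contDiff_const.mul contDiff_id).sub contDiff_const)).mul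
      (Real.smoothTransition.contDiff.comp
        ((contDiff_const.mul (contDiff_const.sub contDiff_id)).sub contDiff_const))
  have hφkC : ∀ k, ContDiff ℝ 1 (φk k) := fun k => by
    simp only [hφk_def]; exact (hζC k).mul (contDiff_id.mul hη)
  have hθne : ∀ x:ℝ, Real.smoothTransition x ≠ 0 → 0 < x :=
    fun x hx => lt_of_not_ge (fun h => hx (Real.smoothTransition.zero_of_nonpos h))
  have hφk_supp : ∀ k : ℕ, 2 ≤ k → tsupport (φk k) ⊆ Ioo (0:ℝ) 1 := by
    intro k hk
    have hk2 : (2:ℝ) ≤ k := by exact_mod_cast hk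
    have hk0 : (0:ℝ) < k := by linarith
    have hsub : Function.support (φk k) ⊆ Icc (1/(k:ℝ)) (1 - 1/(k:ℝ)) := by
      intro r hr
      simp only [hφk_def, Function.mem_support] at hr
      have h1 : Real.smoothTransition ((k:ℝ)*r - 1) ≠ 0 := fun h => hr (by simp [hζ_def, h])
      have h2 : Real.smoothTransition ((k:ℝ)*(1-r) - 1) ≠ 0 := fun h => hr (by simp [hζ_def, h])
      have h3 := hθne _ h1
      have h4 := hθne _ h2
      have h5 : 1/(k:ℝ) < r := (div_lt_iff₀ hk0).2 (by nlinarith)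
      have h6 : 1/(k:ℝ) < 1 - r := (div_lt_iff₀ hk0).2 (by nlinarith)
      exact ⟨h5.le, by linarith⟩
    have hIccsub : Icc (1/(k:ℝ)) (1 - 1/(k:ℝ)) ⊆ Ioo (0:ℝ) 1 := by
      intro x hx
      have h7 : 0 < 1/(k:ℝ) := by positivity
      exact ⟨lt_of_lt_of_le h7 hx.1, lt_of_le_of_lt hx.2 (by linarith)⟩
    exact (closure_minimal hsub isClosed_Icc).trans hIccsub
  -- derivatives of the cutoffs
  have hmulid : ∀ r:ℝ, HasDerivAt (fun s => s * η s) (η r + r * deriv η r) r := fun r => by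
    simpa using (hasDerivAt_id r).fun_mul (hηd r)
  have hζd : ∀ (k:ℕ) (r:ℝ), HasDerivAt (ζ k)
      ((deriv Real.smoothTransition ((k:ℝ)*r-1) * (k:ℝ))
          * Real.smoothTransition ((k:ℝ)*(1-r)-1)
        + Real.smoothTransition ((k:ℝ)*r-1)
          * (deriv Real.smoothTransition ((k:ℝ)*(1-r)-1) * (-(k:ℝ)))) r := by
    intro k r
    have h1 : HasDerivAt (fun r:ℝ => (k:ℝ)*r - 1) ((k:ℝ)) r := by
      simpa using ((hasDerivAt_id r).const_mul (k:ℝ)).sub_const 1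
    have h2 : HasDerivAt (fun r:ℝ => (k:ℝ)*(1-r) - 1) (-(k:ℝ)) r := by
      simpa using (((hasDerivAt_id r).const_sub 1).const_mul (k:ℝ)).sub_const 1
    have h3 := (hθd ((k:ℝ)*r-1)).comp r h1
    have h4 := (hθd ((k:ℝ)*(1-r)-1)).comp r h2
    simp only [hζ_def]
    exact h3.fun_mul h4
  have hφkd : ∀ (k:ℕ) (r:ℝ), HasDerivAt (φk k)
      (((deriv Real.smoothTransition ((k:ℝ)*r-1) * (k:ℝ))
          * Real.smoothTransition ((k:ℝ)*(1-r)-1)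
        + Real.smoothTransition ((k:ℝ)*r-1)
          * (deriv Real.smoothTransition ((k:ℝ)*(1-r)-1) * (-(k:ℝ)))) * (r * η r)
        + ζ k r * (η r + r * deriv η r)) r := by
    intro k r
    simp only [hφk_def]
    exact (hζd k r).fun_mul (hmulid r)
  have hφk_deriv : ∀ (k:ℕ) (r:ℝ), deriv (φk k) r
      = ((deriv Real.smoothTransition ((k:ℝ)*r-1) * (k:ℝ))
          * Real.smoothTransition ((k:ℝ)*(1-r)-1)
        + Real.smoothTransition ((k:ℝ)*r-1)
          * (deriv Real.smoothTransition ((k:ℝ)*(1-r)-1) * (-(k:ℝ)))) * (r * η r)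
        + ζ k r * (η r + r * deriv η r) := fun k r => (hφkd k r).deriv
  -- the uniform derivative bound
  set B := 2*Cθ*Cη + 2*Cθ*L + C1 with hB_def
  have hB0 : 0 ≤ B := by
    rw [hB_def]
    nlinarith [mul_nonneg hCθ0 hCη0, mul_nonneg hCθ0 hL0]
  have hbd : ∀ (k:ℕ), ∀ r ∈ Ioc (0:ℝ) 1, |deriv (φk k) r| ≤ B := by
    intro k r hr
    have hr0 : 0 < r := hr.1
    have hr1 : r ≤ 1 := hr.2
    have hk0 : (0:ℝ) ≤ k := Nat.cast_nonneg k
    have hηr : |η r| ≤ Cη := hCη r ⟨hr0.le, hr1⟩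
    have hηrL : |η r| ≤ L * (1-r) := hLip r ⟨hr0.le, hr1⟩
    have hT1 : |(deriv Real.smoothTransition ((k:ℝ)*r-1) * (k:ℝ))
        * Real.smoothTransition ((k:ℝ)*(1-r)-1) * (r * η r)| ≤ 2*Cθ*Cη := by
      by_cases h : (k:ℝ)*r-1 ∈ Ioo (0:ℝ) 1
      · have hkr2 : (k:ℝ) * r ≤ 2 := by have := h.2; linarith
        have heq : |(deriv Real.smoothTransition ((k:ℝ)*r-1) * (k:ℝ))
            * Real.smoothTransition ((k:ℝ)*(1-r)-1) * (r * η r)|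
            = |deriv Real.smoothTransition ((k:ℝ)*r-1)| * ((k:ℝ) * r)
              * |Real.smoothTransition ((k:ℝ)*(1-r)-1)| * |η r| := by
          rw [abs_mul, abs_mul, abs_mul, abs_mul, abs_of_nonneg hk0, abs_of_nonneg hr0.le]
          ring
        rw [heq]
        have hsm1 : |Real.smoothTransition ((k:ℝ)*(1-r)-1)| ≤ 1 := by
          rw [abs_of_nonneg (Real.smoothTransition.nonneg _)]
          exact Real.smoothTransition.le_one _
        calc |deriv Real.smoothTransition ((k:ℝ)*r-1)| * ((k:ℝ) * r)
              * |Real.smoothTransition ((k:ℝ)*(1-r)-1)| * |η r|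
            ≤ Cθ * 2 * 1 * Cη := by
              apply mul_le_mul _ hηr (abs_nonneg _) (by nlinarith)
              apply mul_le_mul _ hsm1 (abs_nonneg _) (by nlinarith)
              exact mul_le_mul (hCθ _) hkr2 (mul_nonneg hk0 hr0.le) hCθ0
          _ = 2*Cθ*Cη := by ring
      · rw [hθ'0 _ h]
        simp only [zero_mul, abs_zero]
        nlinarith [mul_nonneg hCθ0 hCη0]
    have hT2 : |Real.smoothTransition ((k:ℝ)*r-1)
        * (deriv Real.smoothTransition ((k:ℝ)*(1-r)-1) * (-(k:ℝ))) * (r * η r)| ≤ 2*Cθ*L := by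
      by_cases h : (k:ℝ)*(1-r)-1 ∈ Ioo (0:ℝ) 1
      · have hk1r : (k:ℝ) * (1-r) ≤ 2 := by have := h.2; linarith
        have heq : |Real.smoothTransition ((k:ℝ)*r-1)
            * (deriv Real.smoothTransition ((k:ℝ)*(1-r)-1) * (-(k:ℝ))) * (r * η r)|
            = |Real.smoothTransition ((k:ℝ)*r-1)| * |deriv Real.smoothTransition ((k:ℝ)*(1-r)-1)|
              * ((k:ℝ) * (r * |η r|)) := by
          rw [abs_mul, abs_mul, abs_mul, abs_mul, abs_neg, abs_of_nonneg hk0,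
            abs_of_nonneg hr0.le]
          ring
        rw [heq]
        have hsm1 : |Real.smoothTransition ((k:ℝ)*r-1)| ≤ 1 := by
          rw [abs_of_nonneg (Real.smoothTransition.nonneg _)]
          exact Real.smoothTransition.le_one _
        have hx : (k:ℝ) * (r * |η r|) ≤ 2 * L := by
          have h5 : r * |η r| ≤ L * (1-r) := by
            have h6 : r * |η r| ≤ |η r| := by nlinarith [abs_nonneg (η r)]
            linarith
          calc (k:ℝ) * (r * |η r|) ≤ (k:ℝ) * (L * (1-r)) :=
                mul_le_mul_of_nonneg_left h5 hk0
            _ = L * ((k:ℝ)*(1-r)) := by ring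
            _ ≤ L * 2 := mul_le_mul_of_nonneg_left hk1r hL0
            _ = 2*L := by ring
        calc |Real.smoothTransition ((k:ℝ)*r-1)| * |deriv Real.smoothTransition ((k:ℝ)*(1-r)-1)|
              * ((k:ℝ) * (r * |η r|))
            ≤ 1 * Cθ * (2*L) := by
              apply mul_le_mul _ hx (mul_nonneg hk0 (mul_nonneg hr0.le (abs_nonneg _)))
                (by nlinarith)
              exact mul_le_mul hsm1 (hCθ _) (abs_nonneg _) zero_le_one
          _ = 2*Cθ*L := by ring
      · rw [hθ'0 _ h]
        simp only [zero_mul, mul_zero, abs_zero]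
        nlinarith [mul_nonneg hCθ0 hL0]
    have hT3 : |ζ k r * (η r + r * deriv η r)| ≤ C1 := by
      rw [abs_mul, abs_of_nonneg (hζ01 k r).1]
      calc ζ k r * |η r + r * deriv η r| ≤ 1 * C1 :=
            mul_le_mul (hζ01 k r).2 (hC1 r ⟨hr0.le, hr1⟩) (abs_nonneg _) zero_le_one
        _ = C1 := one_mul _
    rw [hφk_deriv k r]
    have hsplit : ((deriv Real.smoothTransition ((k:ℝ)*r-1) * (k:ℝ))
          * Real.smoothTransition ((k:ℝ)*(1-r)-1)
        + Real.smoothTransition ((k:ℝ)*r-1)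
          * (deriv Real.smoothTransition ((k:ℝ)*(1-r)-1) * (-(k:ℝ)))) * (r * η r)
        = (deriv Real.smoothTransition ((k:ℝ)*r-1) * (k:ℝ))
            * Real.smoothTransition ((k:ℝ)*(1-r)-1) * (r * η r)
          + Real.smoothTransition ((k:ℝ)*r-1)
            * (deriv Real.smoothTransition ((k:ℝ)*(1-r)-1) * (-(k:ℝ))) * (r * η r) := by ring
    calc |((deriv Real.smoothTransition ((k:ℝ)*r-1) * (k:ℝ))
          * Real.smoothTransition ((k:ℝ)*(1-r)-1)
        + Real.smoothTransition ((k:ℝ)*r-1)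
          * (deriv Real.smoothTransition ((k:ℝ)*(1-r)-1) * (-(k:ℝ)))) * (r * η r)
        + ζ k r * (η r + r * deriv η r)|
        ≤ |((deriv Real.smoothTransition ((k:ℝ)*r-1) * (k:ℝ))
          * Real.smoothTransition ((k:ℝ)*(1-r)-1)
        + Real.smoothTransition ((k:ℝ)*r-1)
          * (deriv Real.smoothTransition ((k:ℝ)*(1-r)-1) * (-(k:ℝ)))) * (r * η r)|
          + |ζ k r * (η r + r * deriv η r)| := abs_add_le _ _
      _ ≤ (2*Cθ*Cη + 2*Cθ*L) + C1 := by
          rw [hsplit]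
          exact add_le_add (le_trans (abs_add_le _ _) (add_le_add hT1 hT2)) hT3
      _ = B := by rw [hB_def]
  -- base integrable function
  have hrpow_contOn : ∀ c:ℝ, ContinuousOn (fun r:ℝ => r ^ c) (Ioc (0:ℝ) 1) :=
    fun c r hr => (Real.continuousAt_rpow_const r c (Or.inl (ne_of_gt hr.1))).continuousWithinAt
  have hbase_contOn : ContinuousOn (fun r => |u' r| ^ p) (Ioc (0:ℝ) 1) :=
    (hu'c.abs).rpow_const (fun x hx => Or.inr hp0)
  have hIbase : IntegrableOn (fun r => r ^ ((n:ℝ)-1) * |u' r| ^ p) (Ioc (0:ℝ) 1) := by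
    have hmeas : AEStronglyMeasurable (fun r => r ^ ((n:ℝ)-1) * |u' r| ^ p)
        (volume.restrict (Ioc (0:ℝ) 1)) :=
      ((hrpow_contOn _).mul hbase_contOn).aestronglyMeasurable measurableSet_Ioc
    apply Integrable.mono' hsol.2.2.2.2 hmeas
    rw [ae_restrict_iff' measurableSet_Ioc]
    apply Filter.Eventually.of_forall
    intro r hr
    have h1 : 0 ≤ r ^ ((n:ℝ)-1) := Real.rpow_nonneg hr.1.le _
    have h2 : 0 ≤ |u r| ^ p := Real.rpow_nonneg (abs_nonneg _) _
    have h3 : 0 ≤ |u' r| ^ p := Real.rpow_nonneg (abs_nonneg _) _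
    rw [Real.norm_eq_abs, abs_of_nonneg (mul_nonneg h1 h3)]
    nlinarith
  have hae : ∀ᵐ r ∂(volume.restrict (Ioc (0:ℝ) 1)), r ∈ Ioo (0:ℝ) 1 := by
    rw [ae_restrict_iff' measurableSet_Ioc]
    have h1 : ∀ᵐ (r:ℝ), r ≠ 1 := by
      rw [ae_iff]
      have hset : {a : ℝ | ¬a ≠ 1} = {1} := by ext x; simp
      rw [hset]
      exact measure_singleton 1
    filter_upwards [h1] with r hr1 hmem
    exact ⟨hmem.1, lt_of_le_of_ne hmem.2 hr1⟩
  have hnat := tendsto_natCast_atTop_atTop (R := ℝ)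
  -- Y-side convergence
  have hYtend : Tendsto (fun k => ∫ r in Ioc (0:ℝ) 1, r ^ ((n:ℝ)-3) * |u' r| ^ p * (φk k r)^2)
      atTop (𝓝 (∫ r in Ioc (0:ℝ) 1, r ^ ((n:ℝ)-1) * |u' r| ^ p * (η r)^2)) := by
    apply tendsto_integral_of_dominated_convergence
      (bound := fun r => Cη^2 * (r ^ ((n:ℝ)-1) * |u' r| ^ p))
    · intro k
      exact (((hrpow_contOn _).mul hbase_contOn).mul
        (((hφkC k).continuous.continuousOn).pow 2)).aestronglyMeasurable measurableSet_Ioc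
    · exact hIbase.const_mul _
    · intro k
      rw [ae_restrict_iff' measurableSet_Ioc]
      apply Filter.Eventually.of_forall
      intro r hr
      have hr0 : 0 < r := hr.1
      have h1 : 0 ≤ r ^ ((n:ℝ)-3) := Real.rpow_nonneg hr0.le _
      have h2 : 0 ≤ |u' r| ^ p := Real.rpow_nonneg (abs_nonneg _) _
      have hA1r : r ^ ((n:ℝ)-1) = r ^ ((n:ℝ)-3) * r * r := by
        rw [show (n:ℝ)-1 = (((n:ℝ)-3)+1)+1 by ring, Real.rpow_add_one hr0.ne',
          Real.rpow_add_one hr0.ne']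
      have hφbd : |φk k r| ≤ r * Cη := by
        simp only [hφk_def, abs_mul]
        rw [abs_of_nonneg (hζ01 k r).1, abs_of_nonneg hr0.le]
        calc ζ k r * (r * |η r|) ≤ 1 * (r * Cη) := by
              apply mul_le_mul (hζ01 k r).2 _ (mul_nonneg hr0.le (abs_nonneg _)) zero_le_one
              exact mul_le_mul_of_nonneg_left (hCη r ⟨hr0.le, hr.2⟩) hr0.le
          _ = r * Cη := one_mul _
      have hsq : (φk k r)^2 ≤ (r*Cη)^2 := by
        rw [← sq_abs]
        exact pow_le_pow_left₀ (abs_nonneg _) hφbd 2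
      rw [Real.norm_eq_abs, abs_of_nonneg (mul_nonneg (mul_nonneg h1 h2) (sq_nonneg _))]
      calc r ^ ((n:ℝ)-3) * |u' r| ^ p * (φk k r)^2
          ≤ r ^ ((n:ℝ)-3) * |u' r| ^ p * (r*Cη)^2 :=
            mul_le_mul_of_nonneg_left hsq (mul_nonneg h1 h2)
        _ = Cη^2 * (r ^ ((n:ℝ)-1) * |u' r| ^ p) := by rw [hA1r]; ring
    · filter_upwards [hae] with r hr
      have hr0 : 0 < r := hr.1
      have hr1 : r < 1 := hr.2
      have hA1r : r ^ ((n:ℝ)-1) = r ^ ((n:ℝ)-3) * r * r := by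
        rw [show (n:ℝ)-1 = (((n:ℝ)-3)+1)+1 by ring, Real.rpow_add_one hr0.ne',
          Real.rpow_add_one hr0.ne']
      have hev : ∀ᶠ k : ℕ in atTop, ζ k r = 1 := by
        filter_upwards [hnat.eventually_ge_atTop (2/r), hnat.eventually_ge_atTop (2/(1-r))]
          with k hk1 hk2
        have hθ1 : Real.smoothTransition ((k:ℝ)*r - 1) = 1 := by
          apply Real.smoothTransition.one_of_one_le
          have := (div_le_iff₀ hr0).1 hk1
          linarith
        have hθ2 : Real.smoothTransition ((k:ℝ)*(1-r) - 1) = 1 := by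
          apply Real.smoothTransition.one_of_one_le
          have := (div_le_iff₀ (by linarith : (0:ℝ) < 1-r)).1 hk2
          linarith
        simp [hζ_def, hθ1, hθ2]
      apply Filter.Tendsto.congr' _ tendsto_const_nhds
      filter_upwards [hev] with k hk
      simp only [hφk_def]
      rw [hk, hA1r]
      ring
  -- X-side convergence
  have hXtend : Tendsto
      (fun k => ∫ r in Ioc (0:ℝ) 1, r ^ ((n:ℝ)-1) * |u' r| ^ p * (deriv (φk k) r)^2)
      atTop (𝓝 (∫ r in Ioc (0:ℝ) 1,
        r ^ ((n:ℝ)-1) * |u' r| ^ p * (η r + r * deriv η r)^2)) := by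
    apply tendsto_integral_of_dominated_convergence
      (bound := fun r => B^2 * (r ^ ((n:ℝ)-1) * |u' r| ^ p))
    · intro k
      exact (((hrpow_contOn _).mul hbase_contOn).mul
        ((((hφkC k).continuous_deriv le_rfl).continuousOn).pow 2)).aestronglyMeasurable
        measurableSet_Ioc
    · exact hIbase.const_mul _
    · intro k
      rw [ae_restrict_iff' measurableSet_Ioc]
      apply Filter.Eventually.of_forall
      intro r hr
      have hr0 : 0 < r := hr.1
      have h1 : 0 ≤ r ^ ((n:ℝ)-1) := Real.rpow_nonneg hr0.le _
      have h2 : 0 ≤ |u' r| ^ p := Real.rpow_nonneg (abs_nonneg _) _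
      have hsq : (deriv (φk k) r)^2 ≤ B^2 := by
        rw [← sq_abs]
        exact pow_le_pow_left₀ (abs_nonneg _) (hbd k r hr) 2
      rw [Real.norm_eq_abs, abs_of_nonneg (mul_nonneg (mul_nonneg h1 h2) (sq_nonneg _))]
      calc r ^ ((n:ℝ)-1) * |u' r| ^ p * (deriv (φk k) r)^2
          ≤ r ^ ((n:ℝ)-1) * |u' r| ^ p * B^2 :=
            mul_le_mul_of_nonneg_left hsq (mul_nonneg h1 h2)
        _ = B^2 * (r ^ ((n:ℝ)-1) * |u' r| ^ p) := by ring
    · filter_upwards [hae] with r hr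
      have hr0 : 0 < r := hr.1
      have hr1 : r < 1 := hr.2
      have hev : ∀ᶠ k : ℕ in atTop, deriv (φk k) r = η r + r * deriv η r := by
        filter_upwards [hnat.eventually_ge_atTop (2/r), hnat.eventually_ge_atTop (2/(1-r))]
          with k hk1 hk2
        have ha1 : (1:ℝ) ≤ (k:ℝ)*r - 1 := by
          have := (div_le_iff₀ hr0).1 hk1
          linarith
        have ha2 : (1:ℝ) ≤ (k:ℝ)*(1-r) - 1 := by
          have := (div_le_iff₀ (by linarith : (0:ℝ) < 1-r)).1 hk2
          linarith
        have hz1 : deriv Real.smoothTransition ((k:ℝ)*r-1) = 0 :=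
          hθ'0 _ (fun hmem => absurd hmem.2 (not_lt.2 ha1))
        have hz2 : deriv Real.smoothTransition ((k:ℝ)*(1-r)-1) = 0 :=
          hθ'0 _ (fun hmem => absurd hmem.2 (not_lt.2 ha2))
        have hζ1 : ζ k r = 1 := by
          simp [hζ_def, Real.smoothTransition.one_of_one_le ha1,
            Real.smoothTransition.one_of_one_le ha2]
        rw [hφk_deriv k r, hz1, hz2, hζ1]
        ring
      apply Filter.Tendsto.congr' _ tendsto_const_nhds
      filter_upwards [hev] with k hk
      rw [hk]
  -- conclude
  have hineq : ∀ᶠ k : ℕ in atTop,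
      ((n:ℝ)-1) * (∫ r in Ioc (0:ℝ) 1, r ^ ((n:ℝ)-3) * |u' r| ^ p * (φk k r)^2)
        ≤ (p-1) * ∫ r in Ioc (0:ℝ) 1, r ^ ((n:ℝ)-1) * |u' r| ^ p * (deriv (φk k) r)^2 := by
    rw [eventually_atTop]
    exact ⟨2, fun k hk =>
      stepA n p hp g u u' hg hsol hstab (φk k) (hφkC k) (hφk_supp k hk)⟩
  exact le_of_tendsto_of_tendsto (hYtend.const_mul ((n:ℝ)-1)) (hXtend.const_mul (p-1)) hineq
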